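/- arXiv:2510.10889 — 2 statements merged into one kernel-verified Lean document; each statement's English description precedes it below -/
import Mathlib

section
/- Let G be a finite weighted complete graph on N vertices with edge weights in [0,1], and let 0 ≤ ε ≤ 1. Define G_ε by replacing every edge weight exceeding ε with 1. Let m(ε) be the number of finite 0-dimensional persistence points (0,d) of the Vietoris–Rips filtration of G with ε < d < ∞. Then for any p ≥ 1, the p-Wasserstein distance between the 0-dimensional persistence diagrams of G and G_ε is at most m(ε)^{1/p} · (1 − ε). -/
open scoped Classical
noncomputable section

variable {V : Type*} [Fintype V]

/-- Vietoris–Rips 1-skeleton of a weighted complete graph at scale `α`. -/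
def vrGraph (w : V → V → ℝ) (α : ℝ) : SimpleGraph V where
  Adj i j := i ≠ j ∧ max (w i j) (w j i) ≤ α
  symm := by
    constructor
    intro i j h
    exact ⟨h.1.symm, by rw [max_comm]; exact h.2⟩
  loopless := ⟨fun i h => h.1 rfl⟩

/-- Number of connected components of the Rips 1-skeleton at scale `α`. -/
def compCount (w : V → V → ℝ) (α : ℝ) : ℕ :=
  Nat.card (vrGraph w α).ConnectedComponent

/-- Left limit of the component counting function at `d`. -/
def compCountLeft (w : V → V → ℝ) (d : ℝ) : ℕ :=
  sInf (compCount w '' Set.Iio d)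

/-- Multiplicity of `d` as a finite death time in the `H₀` persistence diagram. -/
def deathMult (w : V → V → ℝ) (d : ℝ) : ℕ :=
  compCountLeft w d - compCount w d

/-- The finitely many candidate filtration values (the edge weights). -/
def weightVals (w : V → V → ℝ) : Finset ℝ :=
  Finset.image (fun p : V × V => max (w p.1 p.2) (w p.2 p.1)) Finset.univ

/-- The multiset of finite death times of the 0-dimensional persistence diagram
of the Vietoris–Rips filtration of the weighted complete graph `w`. -/
def finiteDeaths (w : V → V → ℝ) : Multiset ℝ :=
  (weightVals w).val.bind fun d => Multiset.replicate (deathMult w d) d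

/-- The 0-dimensional persistence diagram (finite points; all births are `0`). -/
def D0 (w : V → V → ℝ) : Multiset (ℝ × ℝ) :=
  (finiteDeaths w).map fun d => (0, d)

/-- Threshold modification: weights above `ε` are raised to `1`. -/
def thresh (w : V → V → ℝ) (ε : ℝ) : V → V → ℝ :=
  fun i j => if w i j ≤ ε then w i j else 1

/-- The number of finite 0-dimensional persistence points with death time `> ε`. -/
def mEps (w : V → V → ℝ) (ε : ℝ) : ℕ :=
  ((finiteDeaths w).filter (fun d => ε < d)).card

/-- A matching between two persistence diagrams: a multiset of pairs whose
projections recover each diagram augmented with some diagonal points. -/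
def IsMatching (D1 D2 : Multiset (ℝ × ℝ)) (M : Multiset ((ℝ × ℝ) × (ℝ × ℝ))) : Prop :=
  ∃ S1 S2 : Multiset (ℝ × ℝ), (∀ u ∈ S1, u.1 = u.2) ∧ (∀ u ∈ S2, u.1 = u.2) ∧
    M.map Prod.fst = D1 + S1 ∧ M.map Prod.snd = D2 + S2

/-- The `p`-th power cost of a matching, with the `ℓ_p` ground metric. -/
def matchCost (p : ℝ) (M : Multiset ((ℝ × ℝ) × (ℝ × ℝ))) : ℝ :=
  (M.map fun q => |q.1.1 - q.2.1| ^ p + |q.1.2 - q.2.2| ^ p).sum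

/-- The `p`-Wasserstein distance between persistence diagrams. -/
def diagramDist (p : ℝ) (D1 D2 : Multiset (ℝ × ℝ)) : ℝ :=
  sInf {c | ∃ M, IsMatching D1 D2 M ∧ c = matchCost p M ^ (1 / p)}

/- ============= auxiliary lemmas ============= -/

private lemma compCount_anti (w : V → V → ℝ) :
    ∀ a b : ℝ, a ≤ b → compCount w b ≤ compCount w a := by
  intro a b hab
  have hle : vrGraph w a ≤ vrGraph w b := by
    intro i j hij
    exact (⟨hij.1, hij.2.trans hab⟩ : i ≠ j ∧ max (w i j) (w j i) ≤ b)
  have hsurj : Function.Surjective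
      (SimpleGraph.ConnectedComponent.map (SimpleGraph.Hom.ofLE hle)) := by
    intro c
    induction c using SimpleGraph.ConnectedComponent.ind with
    | _ v => exact ⟨(vrGraph w a).connectedComponentMk v, rfl⟩
  exact Nat.card_le_card_of_surjective _ hsurj

private lemma sInf_image_Iio_eq (g : ℝ → ℕ) (hg : ∀ a b : ℝ, a ≤ b → g b ≤ g a)
    {β d : ℝ} (hβ : β < d) (hconst : ∀ α, β ≤ α → α < d → g α = g β) :
    sInf (g '' Set.Iio d) = g β := by
  refine le_antisymm (Nat.sInf_le ⟨β, hβ, rfl⟩) (le_csInf ⟨g β, β, hβ, rfl⟩ ?_)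
  rintro x ⟨α, hα, rfl⟩
  rcases le_total α β with h | h
  · exact hg α β h
  · exact (hconst α h hα).ge

private lemma telescope (g : ℝ → ℕ) (hg : ∀ a b : ℝ, a ≤ b → g b ≤ g a) (S : Finset ℝ)
    (hS : ∀ α β : ℝ, α ≤ β → (∀ s ∈ S, ¬(α < s ∧ s ≤ β)) → g α = g β) :
    ∀ (n : ℕ) (a b : ℝ), a ≤ b → (S.filter (fun d => a < d ∧ d ≤ b)).card = n →
      (∑ d ∈ S.filter (fun d => a < d ∧ d ≤ b), (sInf (g '' Set.Iio d) - g d)) = g a - g b := by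
  intro n
  induction n with
  | zero =>
    intro a b hab hcard
    have hT : S.filter (fun d => a < d ∧ d ≤ b) = ∅ := Finset.card_eq_zero.mp hcard
    have hgab : g a = g b := by
      refine hS a b hab (fun s hs hcon => ?_)
      have : s ∈ S.filter (fun d => a < d ∧ d ≤ b) := Finset.mem_filter.mpr ⟨hs, hcon⟩
      rw [hT] at this
      exact absurd this (Finset.notMem_empty s)
    rw [hT, hgab]
    simp
  | succ n ih =>
    intro a b hab hcard
    set T := S.filter (fun d => a < d ∧ d ≤ b) with hTdef
    have hTne : T.Nonempty := Finset.card_pos.mp (by omega)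
    set m := T.max' hTne with hm
    have hmT : m ∈ T := T.max'_mem hTne
    have hmS : m ∈ S := (Finset.mem_filter.mp hmT).1
    have ham : a < m := (Finset.mem_filter.mp hmT).2.1
    have hmb : m ≤ b := (Finset.mem_filter.mp hmT).2.2
    set U := S.filter (fun s => a < s ∧ s < m) with hUdef
    set β := if hU : U.Nonempty then U.max' hU else a with hβdef
    have haβ : a ≤ β := by
      rw [hβdef]
      split
      · next hU => exact le_of_lt (Finset.mem_filter.mp (U.max'_mem hU)).2.1
      · exact le_refl a
    have hβm : β < m := by
      rw [hβdef]
      split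
      · next hU => exact (Finset.mem_filter.mp (U.max'_mem hU)).2.2
      · exact ham
    have hnoS : ∀ s ∈ S, ¬(β < s ∧ s < m) := by
      intro s hs ⟨h1, h2⟩
      have hsU : s ∈ U := Finset.mem_filter.mpr ⟨hs, lt_of_le_of_lt haβ h1, h2⟩
      have hU : U.Nonempty := ⟨s, hsU⟩
      have : s ≤ β := by
        rw [hβdef, dif_pos hU]
        exact U.le_max' s hsU
      exact absurd h1 (not_lt.mpr this)
    have hgleft : sInf (g '' Set.Iio m) = g β := by
      refine sInf_image_Iio_eq g hg hβm (fun α hβα hαm => ?_)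
      exact (hS β α hβα (fun s hs ⟨h1, h2⟩ =>
        hnoS s hs ⟨h1, lt_of_le_of_lt h2 hαm⟩)).symm
    have hgb : g m = g b := by
      refine hS m b hmb (fun s hs ⟨h1, h2⟩ => ?_)
      have : s ∈ T := Finset.mem_filter.mpr ⟨hs, lt_trans ham h1, h2⟩
      exact absurd h1 (not_lt.mpr (T.le_max' s this))
    have hTe : T.erase m = S.filter (fun d => a < d ∧ d ≤ β) := by
      ext d
      simp only [Finset.mem_erase, hTdef, Finset.mem_filter]
      constructor
      · rintro ⟨hdm, hdS, hda, hdb⟩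
        refine ⟨hdS, hda, ?_⟩
        have hdm' : d < m := lt_of_le_of_ne (T.le_max' d (Finset.mem_filter.mpr ⟨hdS, hda, hdb⟩)) hdm
        by_contra h
        exact hnoS d hdS ⟨not_le.mp h, hdm'⟩
      · rintro ⟨hdS, hda, hdβ⟩
        exact ⟨ne_of_lt (lt_of_le_of_lt hdβ hβm),
          hdS, hda, le_trans hdβ (le_trans hβm.le hmb)⟩
    have hcard' : (S.filter (fun d => a < d ∧ d ≤ β)).card = n := by
      rw [← hTe, Finset.card_erase_of_mem hmT]
      omega
    have hih := ih a β haβ hcard'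
    calc (∑ d ∈ T, (sInf (g '' Set.Iio d) - g d))
        = (sInf (g '' Set.Iio m) - g m) + ∑ d ∈ T.erase m, (sInf (g '' Set.Iio d) - g d) :=
          (Finset.add_sum_erase T _ hmT).symm
      _ = (g β - g m) + (g a - g β) := by rw [hgleft, hTe, hih]
      _ = (g a - g β) + (g β - g m) := add_comm _ _
      _ = g a - g m := tsub_add_tsub_cancel (hg a β haβ) (hg β m hβm.le)
      _ = g a - g b := by rw [hgb]

section ThreshLemmas

variable {w : V → V → ℝ} {ε : ℝ}

private lemma vr_thresh_low (hw1 : ∀ i j, w i j ≤ 1) (hsymm : ∀ i j, w i j = w j i)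
    (hε1 : ε ≤ 1) {α : ℝ} (hαε : α ≤ ε) :
    vrGraph (thresh w ε) α = vrGraph w α := by
  ext i j
  show (i ≠ j ∧ max (thresh w ε i j) (thresh w ε j i) ≤ α) ↔ (i ≠ j ∧ max (w i j) (w j i) ≤ α)
  have h1 : max (thresh w ε i j) (thresh w ε j i) = thresh w ε i j := by
    unfold thresh; rw [← hsymm i j, max_self]
  have h2 : max (w i j) (w j i) = w i j := by rw [← hsymm i j, max_self]
  rw [h1, h2]
  unfold thresh
  by_cases h : w i j ≤ ε
  · rw [if_pos h]
  · rw [if_neg h]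
    constructor
    · intro ⟨hij, hcon⟩
      exact absurd (le_trans hcon hαε) (by linarith [hw1 i j, not_le.mp h])
    · intro ⟨hij, hcon⟩
      exact absurd (le_trans hcon hαε) h

private lemma vr_thresh_mid (hsymm : ∀ i j, w i j = w j i)
    {α : ℝ} (hεα : ε ≤ α) (hα1 : α < 1) :
    vrGraph (thresh w ε) α = vrGraph w ε := by
  ext i j
  show (i ≠ j ∧ max (thresh w ε i j) (thresh w ε j i) ≤ α) ↔ (i ≠ j ∧ max (w i j) (w j i) ≤ ε)
  have h1 : max (thresh w ε i j) (thresh w ε j i) = thresh w ε i j := by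
    unfold thresh; rw [← hsymm i j, max_self]
  have h2 : max (w i j) (w j i) = w i j := by rw [← hsymm i j, max_self]
  rw [h1, h2]
  unfold thresh
  by_cases h : w i j ≤ ε
  · rw [if_pos h]
    exact and_congr_right fun _ => iff_of_true (le_trans h hεα) h
  · rw [if_neg h]
    exact and_congr_right fun _ => iff_of_false (not_le.mpr hα1) h

private lemma vr_thresh_one (hw1 : ∀ i j, w i j ≤ 1) (hε0 : 0 ≤ ε) :
    vrGraph (thresh w ε) 1 = vrGraph w 1 := by
  ext i j
  show (i ≠ j ∧ max (thresh w ε i j) (thresh w ε j i) ≤ 1) ↔ (i ≠ j ∧ max (w i j) (w j i) ≤ 1)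
  have ht : ∀ a b : V, thresh w ε a b ≤ 1 := by
    intro a b
    unfold thresh
    by_cases h : w a b ≤ ε
    · rw [if_pos h]; exact hw1 a b
    · rw [if_neg h]
  exact and_congr_right fun _ =>
    iff_of_true (max_le (ht i j) (ht j i)) (max_le (hw1 i j) (hw1 j i))

private lemma compCount_thresh_low (hw1 : ∀ i j, w i j ≤ 1) (hsymm : ∀ i j, w i j = w j i)
    (hε1 : ε ≤ 1) {α : ℝ} (hαε : α ≤ ε) :
    compCount (thresh w ε) α = compCount w α := by
  unfold compCount
  rw [vr_thresh_low hw1 hsymm hε1 hαε]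

private lemma deathMult_thresh_low (hw1 : ∀ i j, w i j ≤ 1) (hsymm : ∀ i j, w i j = w j i)
    (hε1 : ε ≤ 1) {d : ℝ} (hd : d ≤ ε) :
    deathMult (thresh w ε) d = deathMult w d := by
  have himg : compCount (thresh w ε) '' Set.Iio d = compCount w '' Set.Iio d :=
    Set.image_congr fun α hα =>
      compCount_thresh_low hw1 hsymm hε1 (le_of_lt (lt_of_lt_of_le hα hd))
  unfold deathMult compCountLeft
  rw [compCount_thresh_low hw1 hsymm hε1 hd, himg]

private lemma mem_weightVals_bounds (hw0 : ∀ i j, 0 ≤ w i j) (hw1 : ∀ i j, w i j ≤ 1)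
    {d : ℝ} (hd : d ∈ weightVals w) : 0 ≤ d ∧ d ≤ 1 := by
  obtain ⟨p, -, rfl⟩ := Finset.mem_image.mp hd
  exact ⟨le_trans (hw0 p.1 p.2) (le_max_left _ _), max_le (hw1 p.1 p.2) (hw1 p.2 p.1)⟩

private lemma mem_finiteDeaths_weightVals {d : ℝ} (hd : d ∈ finiteDeaths w) :
    d ∈ weightVals w := by
  obtain ⟨a, ha, hda⟩ := Multiset.mem_bind.mp hd
  rw [Multiset.eq_of_mem_replicate hda]
  exact ha

private lemma weightVals_thresh (hsymm : ∀ i j, w i j = w j i) :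
    weightVals (thresh w ε) = (weightVals w).image (fun x => if x ≤ ε then x else 1) := by
  unfold weightVals
  rw [Finset.image_image]
  apply Finset.image_congr
  intro p _
  show max (thresh w ε p.1 p.2) (thresh w ε p.2 p.1)
      = (fun x => if x ≤ ε then x else 1) (max (w p.1 p.2) (w p.2 p.1))
  have h1 : max (thresh w ε p.1 p.2) (thresh w ε p.2 p.1) = thresh w ε p.1 p.2 := by
    unfold thresh; rw [← hsymm p.1 p.2, max_self]
  have h2 : max (w p.1 p.2) (w p.2 p.1) = w p.1 p.2 := by rw [← hsymm p.1 p.2, max_self]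
  rw [h1, h2]
  rfl

private lemma vrGraph_locally_const {α β : ℝ} (hαβ : α ≤ β)
    (h : ∀ s ∈ weightVals w, ¬(α < s ∧ s ≤ β)) :
    vrGraph w α = vrGraph w β := by
  ext i j
  show (i ≠ j ∧ max (w i j) (w j i) ≤ α) ↔ (i ≠ j ∧ max (w i j) (w j i) ≤ β)
  refine and_congr_right fun _ => ⟨fun h2 => h2.trans hαβ, fun h2 => ?_⟩
  by_contra hcon
  exact h _ (Finset.mem_image.mpr ⟨(i, j), Finset.mem_univ _, rfl⟩) ⟨not_le.mp hcon, h2⟩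

private lemma finiteDeaths_thresh (hw0 : ∀ i j, 0 ≤ w i j) (hw1 : ∀ i j, w i j ≤ 1)
    (hsymm : ∀ i j, w i j = w j i) (hε0 : 0 ≤ ε) (hε1 : ε ≤ 1) :
    finiteDeaths (thresh w ε) = (finiteDeaths w).map (fun x => if x ≤ ε then x else 1) := by
  set f : ℝ → ℝ := fun x => if x ≤ ε then x else 1 with hf
  have hRHS : (finiteDeaths w).map f
      = ∑ d ∈ weightVals w, Multiset.replicate (deathMult w d) (f d) := by
    unfold finiteDeaths
    rw [Multiset.map_bind]
    rw [show ((weightVals w).val.bind fun d => (Multiset.replicate (deathMult w d) d).map f)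
        = ∑ d ∈ weightVals w, (Multiset.replicate (deathMult w d) d).map f from rfl]
    exact Finset.sum_congr rfl fun d _ => Multiset.map_replicate f _ d
  have hLHS : finiteDeaths (thresh w ε)
      = ∑ d ∈ (weightVals w).image f, Multiset.replicate (deathMult (thresh w ε) d) d := by
    unfold finiteDeaths
    rw [weightVals_thresh hsymm]
    rfl
  by_cases hhi : ∃ d ∈ weightVals w, ¬ d ≤ ε
  · obtain ⟨d0, hd0, hd0'⟩ := hhi
    have hd0le := (mem_weightVals_bounds hw0 hw1 hd0).2
    have hεlt : ε < 1 := lt_of_lt_of_le (not_le.mp hd0') hd0le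
    have hWVt : (weightVals w).image f
        = (weightVals w).filter (fun x => x ≤ ε) ∪ {1} := by
      ext x
      simp only [Finset.mem_image, Finset.mem_union, Finset.mem_filter,
        Finset.mem_singleton]
      constructor
      · rintro ⟨d, hd, rfl⟩
        by_cases h : d ≤ ε
        · left
          have hfd : f d = d := if_pos h
          rw [hfd]
          exact ⟨hd, h⟩
        · right
          exact if_neg h
      · rintro (⟨hx, hxε⟩ | rfl)
        · exact ⟨x, hx, if_pos hxε⟩
        · exact ⟨d0, hd0, if_neg hd0'⟩
    have hdisj : Disjoint ((weightVals w).filter (fun x => x ≤ ε)) ({1} : Finset ℝ) := by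
      rw [Finset.disjoint_singleton_right]
      intro h
      exact absurd (Finset.mem_filter.mp h).2 (not_le.mpr hεlt)
    -- key identity: deathMult at 1 for thresholded graph
    have hcc1 : compCount (thresh w ε) 1 = compCount w 1 := by
      unfold compCount; rw [vr_thresh_one hw1 hε0]
    have hccε : compCount (thresh w ε) ε = compCount w ε :=
      compCount_thresh_low hw1 hsymm hε1 le_rfl
    have hleft1 : compCountLeft (thresh w ε) 1 = compCount w ε := by
      unfold compCountLeft
      rw [sInf_image_Iio_eq (compCount (thresh w ε)) (compCount_anti _) hεlt
        (fun α hεα hα1 => ?_), hccε]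
      unfold compCount
      rw [vr_thresh_mid hsymm hεα hα1, vr_thresh_mid hsymm le_rfl hεlt]
    have htel := telescope (compCount w) (compCount_anti w) (weightVals w)
      (fun α β hαβ h => by unfold compCount; rw [vrGraph_locally_const hαβ h])
      ((weightVals w).filter (fun d => ε < d ∧ d ≤ 1)).card ε 1 hεlt.le rfl
    have hfiltereq : (weightVals w).filter (fun d => ε < d ∧ d ≤ 1)
        = (weightVals w).filter (fun x => ¬ x ≤ ε) := by
      apply Finset.filter_congr
      intro d hd
      have := (mem_weightVals_bounds hw0 hw1 hd).2
      constructor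
      · rintro ⟨h1, -⟩; exact not_le.mpr h1
      · intro h; exact ⟨not_le.mp h, this⟩
    have hdm1 : deathMult (thresh w ε) 1
        = ∑ d ∈ (weightVals w).filter (fun x => ¬ x ≤ ε), deathMult w d := by
      unfold deathMult
      rw [hleft1, hcc1, ← hfiltereq, ← htel]
      rfl
    rw [hLHS, hRHS, hWVt, Finset.sum_union hdisj,
      ← Finset.sum_filter_add_sum_filter_not (weightVals w) (fun x => x ≤ ε)
        (fun d => Multiset.replicate (deathMult w d) (f d))]
    congr 1
    · apply Finset.sum_congr rfl
      intro d hd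
      have hdε := (Finset.mem_filter.mp hd).2
      have hfd : f d = d := if_pos hdε
      rw [deathMult_thresh_low hw1 hsymm hε1 hdε, hfd]
    · rw [Finset.sum_singleton, hdm1]
      have hrep : ∀ (s : Finset ℝ) (F : ℝ → ℕ),
          (∑ d ∈ s, Multiset.replicate (F d) (1:ℝ))
            = Multiset.replicate (∑ d ∈ s, F d) 1 := by
        intro s F
        classical
        induction s using Finset.induction_on with
        | empty => simp
        | insert _ _ hnotmem ih =>
          rw [Finset.sum_insert hnotmem, Finset.sum_insert hnotmem, ih,
            Multiset.replicate_add]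
      rw [← hrep ((weightVals w).filter (fun x => ¬ x ≤ ε)) (deathMult w)]
      apply Finset.sum_congr rfl
      intro d hd
      have hdε := (Finset.mem_filter.mp hd).2
      have hfd : f d = 1 := if_neg hdε
      rw [hfd]
  · push_neg at hhi
    have himg : (weightVals w).image f = weightVals w := by
      have : ∀ d ∈ weightVals w, f d = d := fun d hd => if_pos (hhi d hd)
      rw [Finset.image_congr (fun d hd => this d hd), Finset.image_id']
    rw [hLHS, hRHS, himg]
    apply Finset.sum_congr rfl
    intro d hd
    have hdε := hhi d hd
    have hfd : f d = d := if_pos hdε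
    rw [deathMult_thresh_low hw1 hsymm hε1 hdε, hfd]

end ThreshLemmas
/-- For a finite weighted complete graph `w` on `N` vertices with
weights in `[0,1]` and `0 ≤ ε ≤ 1`, the `p`-Wasserstein distance between the
0-dimensional persistence diagrams of `G` and its `ε`-thresholded version is at
most `m(ε)^{1/p} (1 - ε)`. -/
theorem wasserstein_bound_thresholded
    {N : ℕ} (w : Fin N → Fin N → ℝ)
    (hw0 : ∀ i j, 0 ≤ w i j) (hw1 : ∀ i j, w i j ≤ 1)
    (hsymm : ∀ i j, w i j = w j i)
    (ε : ℝ) (hε0 : 0 ≤ ε) (hε1 : ε ≤ 1) (p : ℝ) (hp : 1 ≤ p) :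
    diagramDist p (D0 w) (D0 (thresh w ε)) ≤ (mEps w ε : ℝ) ^ (1 / p) * (1 - ε) := by
  have hp0 : (0:ℝ) < p := lt_of_lt_of_le one_pos hp
  have h1ε : (0:ℝ) ≤ 1 - ε := by linarith
  set f : ℝ → ℝ := fun x => if x ≤ ε then x else 1 with hf
  have hkey : finiteDeaths (thresh w ε) = (finiteDeaths w).map f :=
    finiteDeaths_thresh hw0 hw1 hsymm hε0 hε1
  set M : Multiset ((ℝ × ℝ) × (ℝ × ℝ)) :=
    (finiteDeaths w).map (fun d => ((0, d), (0, f d))) with hM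
  have hmatch : IsMatching (D0 w) (D0 (thresh w ε)) M := by
    refine ⟨0, 0, by simp, by simp, ?_, ?_⟩
    · rw [add_zero, hM, Multiset.map_map]
      rfl
    · rw [add_zero, hM, Multiset.map_map]
      unfold D0
      rw [hkey, Multiset.map_map]
      rfl
  have hcost_nonneg : ∀ M' : Multiset ((ℝ × ℝ) × (ℝ × ℝ)), 0 ≤ matchCost p M' := by
    intro M'
    apply Multiset.sum_nonneg
    intro x hx
    obtain ⟨q, -, rfl⟩ := Multiset.mem_map.mp hx
    exact add_nonneg (Real.rpow_nonneg (abs_nonneg _) _) (Real.rpow_nonneg (abs_nonneg _) _)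
  have hcost : matchCost p M ≤ (mEps w ε : ℝ) * (1 - ε) ^ p := by
    unfold matchCost
    rw [hM, Multiset.map_map]
    set g : ℝ → ℝ := fun d => if ε < d then (1 - ε) ^ p else 0 with hg
    have hle : ((finiteDeaths w).map
        ((fun q : (ℝ × ℝ) × (ℝ × ℝ) => |q.1.1 - q.2.1| ^ p + |q.1.2 - q.2.2| ^ p)
          ∘ (fun d => ((0, d), (0, f d))))).sum ≤ ((finiteDeaths w).map g).sum := by
      apply Multiset.sum_map_le_sum_map
      intro d hd
      have hd1 : d ≤ 1 :=
        (mem_weightVals_bounds hw0 hw1 (mem_finiteDeaths_weightVals hd)).2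
      show |(0:ℝ) - 0| ^ p + |d - f d| ^ p ≤ g d
      rw [sub_self, abs_zero, Real.zero_rpow (ne_of_gt hp0), zero_add]
      by_cases h : d ≤ ε
      · have hfd : f d = d := if_pos h
        have hgd : g d = 0 := if_neg (not_lt.mpr h)
        rw [hfd, hgd, sub_self, abs_zero, Real.zero_rpow (ne_of_gt hp0)]
      · have hfd : f d = 1 := if_neg h
        have hgd : g d = (1 - ε) ^ p := if_pos (not_le.mp h)
        rw [hfd, hgd]
        have habs : |d - 1| = 1 - d := by
          rw [abs_of_nonpos (by linarith)]; ring
        rw [habs]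
        exact Real.rpow_le_rpow (by linarith) (by linarith [not_le.mp h]) hp0.le
    refine le_trans hle ?_
    rw [← Multiset.filter_add_not (fun d => ε < d) (finiteDeaths w), Multiset.map_add,
      Multiset.sum_add]
    have h1 : ((Multiset.filter (fun d => ε < d) (finiteDeaths w)).map g).sum
        = (mEps w ε : ℝ) * (1 - ε) ^ p := by
      have : (Multiset.filter (fun d => ε < d) (finiteDeaths w)).map g
          = (Multiset.filter (fun d => ε < d) (finiteDeaths w)).map
              (fun _ => (1 - ε) ^ p) := by
        apply Multiset.map_congr rfl
        intro d hd
        exact if_pos (Multiset.mem_filter.mp hd).2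
      rw [this, Multiset.map_const', Multiset.sum_replicate, nsmul_eq_mul]
      rfl
    have h2 : ((Multiset.filter (fun d => ¬ ε < d) (finiteDeaths w)).map g).sum = 0 := by
      apply Multiset.sum_eq_zero
      intro x hx
      obtain ⟨d, hd, rfl⟩ := Multiset.mem_map.mp hx
      exact if_neg (Multiset.mem_filter.mp hd).2
    rw [h1, h2, add_zero]
  have hbdd : BddBelow {c | ∃ M', IsMatching (D0 w) (D0 (thresh w ε)) M'
      ∧ c = matchCost p M' ^ (1 / p)} := by
    refine ⟨0, ?_⟩
    rintro c ⟨M', -, rfl⟩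
    exact Real.rpow_nonneg (hcost_nonneg M') _
  have hmem : matchCost p M ^ (1 / p) ∈ {c | ∃ M', IsMatching (D0 w) (D0 (thresh w ε)) M'
      ∧ c = matchCost p M' ^ (1 / p)} := ⟨M, hmatch, rfl⟩
  refine le_trans (csInf_le hbdd hmem) ?_
  have hstep : matchCost p M ^ (1 / p) ≤ ((mEps w ε : ℝ) * (1 - ε) ^ p) ^ (1 / p) :=
    Real.rpow_le_rpow (hcost_nonneg M) hcost (by positivity)
  refine le_trans hstep ?_
  rw [Real.mul_rpow (Nat.cast_nonneg _) (Real.rpow_nonneg h1ε _),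
    ← Real.rpow_mul h1ε, mul_one_div_cancel (ne_of_gt hp0), Real.rpow_one]

end
end

section
/- Let c(ε) denote the number of connected components of the Vietoris–Rips 1-skeleton of G at scale ε. Then c(ε) = m(ε) + 1, where m(ε) is the number of finite 0-dimensional persistence points of G with death time strictly greater than ε. Consequently, W_p(D_0(G), D_0(G_ε)) ≤ (c(ε) − 1)^{1/p}(1 − ε). -/
open scoped Classical
noncomputable section

variable {V : Type*} [Fintype V]

-- Auxiliary lemmas -------------------------------------------------------

lemma aux_mem_weightVals (w : V → V → ℝ) (i j : V) :
    max (w i j) (w j i) ∈ weightVals w :=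
  Finset.mem_image.2 ⟨(i, j), Finset.mem_univ _, rfl⟩

lemma aux_compCount_anti (w : V → V → ℝ) {α β : ℝ} (h : α ≤ β) :
    compCount w β ≤ compCount w α := by
  have hle : vrGraph w α ≤ vrGraph w β := fun i j hij => ⟨hij.1, hij.2.trans h⟩
  apply Nat.card_le_card_of_surjective
    (SimpleGraph.ConnectedComponent.map (SimpleGraph.Hom.ofLE hle))
  intro c
  refine c.ind fun v => ?_
  exact ⟨(vrGraph w α).connectedComponentMk v, SimpleGraph.ConnectedComponent.map_mk _ v⟩

lemma aux_vrGraph_congr (w : V → V → ℝ) {α β : ℝ}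
    (h : ∀ m ∈ weightVals w, (m ≤ α ↔ m ≤ β)) : vrGraph w α = vrGraph w β := by
  ext i j
  exact and_congr_right fun _ => h _ (aux_mem_weightVals w i j)

lemma aux_compCount_congr (w : V → V → ℝ) {α β : ℝ}
    (h : ∀ m ∈ weightVals w, (m ≤ α ↔ m ≤ β)) : compCount w α = compCount w β := by
  unfold compCount; rw [aux_vrGraph_congr w h]

omit [Fintype V] in
lemma aux_compCount_eq_one [Nonempty V] (w : V → V → ℝ) {α : ℝ}
    (h : ∀ i j, max (w i j) (w j i) ≤ α) : compCount w α = 1 := by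
  have hconn : ∀ u v : V, (vrGraph w α).Reachable u v := by
    intro u v
    by_cases huv : u = v
    · subst huv; exact SimpleGraph.Reachable.refl u
    · exact SimpleGraph.Adj.reachable ⟨huv, h u v⟩
  rw [compCount, Nat.card_eq_one_iff_unique]
  refine ⟨⟨fun c d => ?_⟩, ⟨(vrGraph w α).connectedComponentMk (Classical.arbitrary V)⟩⟩
  refine c.ind fun u => d.ind fun v => ?_
  exact SimpleGraph.ConnectedComponent.sound (hconn u v)

lemma aux_compCountLeft_eq (w : V → V → ℝ) {d α0 : ℝ} (h0 : α0 < d)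
    (h : ∀ m ∈ weightVals w, m < d → m ≤ α0) :
    compCountLeft w d = compCount w α0 := by
  apply le_antisymm
  · exact csInf_le (OrderBot.bddBelow _) ⟨α0, h0, rfl⟩
  · apply le_csInf
    · exact ⟨compCount w (d - 1), ⟨d - 1, by simp only [Set.mem_Iio]; linarith, rfl⟩⟩
    rintro b ⟨α, hα, rfl⟩
    simp only [Set.mem_Iio] at hα
    rcases le_or_gt α α0 with hle | hlt
    · exact aux_compCount_anti w hle
    · refine le_of_eq (aux_compCount_congr w fun m hm => ?_)
      exact ⟨fun hmα0 => hmα0.trans hlt.le, fun hmα => h m hm (lt_of_le_of_lt hmα hα)⟩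

lemma aux_telescope [Nonempty V] (w : V → V → ℝ) (hw1 : ∀ m ∈ weightVals w, m ≤ (1:ℝ)) :
    ∀ (n : ℕ) (S : Finset ℝ) (β : ℝ), S.card = n →
      S = (weightVals w).filter (fun m => β < m) →
      compCount w β = S.sum (deathMult w) + 1 := by
  intro n
  induction n with
  | zero =>
    intro S β hcard hS
    have hSempty : S = ∅ := Finset.card_eq_zero.1 hcard
    have hstep : compCount w β = compCount w 1 := by
      apply aux_compCount_congr
      intro m hm
      have hmβ : m ≤ β := by
        by_contra hc
        have hmem : m ∈ S := by
          rw [hS]; exact Finset.mem_filter.2 ⟨hm, lt_of_not_ge hc⟩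
        rw [hSempty] at hmem
        simp at hmem
      exact ⟨fun _ => hw1 m hm, fun _ => hmβ⟩
    rw [hstep, aux_compCount_eq_one w (fun i j => hw1 _ (aux_mem_weightVals w i j)), hSempty]
    simp
  | succ n ih =>
    intro S β hcard hS
    have hne : S.Nonempty := Finset.card_pos.1 (by omega)
    set d0 := S.min' hne with hd0
    have hd0S : d0 ∈ S := S.min'_mem hne
    have hd0w : d0 ∈ weightVals w ∧ β < d0 := by
      have := hS ▸ hd0S; exact Finset.mem_filter.1 this
    have hleft : compCountLeft w d0 = compCount w β := by
      apply aux_compCountLeft_eq w hd0w.2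
      intro m hm hmd0
      by_contra hc
      have hmS : m ∈ S := hS ▸ Finset.mem_filter.2 ⟨hm, lt_of_not_ge hc⟩
      exact absurd (S.min'_le m hmS) (not_le.2 hmd0)
    have hIH : compCount w d0 = (∑ x ∈ S.erase d0, deathMult w x) + 1 := by
      apply ih (S.erase d0) d0
      · rw [Finset.card_erase_of_mem hd0S, hcard]; omega
      · ext m
        simp only [Finset.mem_erase, hS, Finset.mem_filter]
        constructor
        · rintro ⟨hne', hm, hβ⟩
          exact ⟨hm, lt_of_le_of_ne (S.min'_le m (hS ▸ Finset.mem_filter.2 ⟨hm, hβ⟩)) (Ne.symm hne')⟩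
        · rintro ⟨hm, hd⟩
          exact ⟨ne_of_gt hd, hm, hd0w.2.trans hd⟩
    have hmono : compCount w d0 ≤ compCount w β := aux_compCount_anti w hd0w.2.le
    have hdm : deathMult w d0 = compCount w β - compCount w d0 := by
      rw [deathMult, hleft]
    rw [← Finset.add_sum_erase S (deathMult w) hd0S, hdm]
    omega

lemma aux_compCount_eq_sum [Nonempty V] (w : V → V → ℝ)
    (hw1 : ∀ m ∈ weightVals w, m ≤ (1:ℝ)) (β : ℝ) :
    compCount w β = ((weightVals w).filter (fun m => β < m)).sum (deathMult w) + 1 :=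
  aux_telescope w hw1 _ _ β rfl rfl

-- multiset helpers

lemma aux_filter_bind {α β : Type*} (s : Multiset α) (f : α → Multiset β) (p : β → Prop)
    [DecidablePred p] : (s.bind f).filter p = s.bind fun a => (f a).filter p := by
  induction s using Multiset.induction with
  | empty => simp
  | cons a s ih => simp [Multiset.filter_add, ih]

lemma aux_filter_replicate {α : Type*} (n : ℕ) (a : α) (p : α → Prop) [DecidablePred p] :
    (Multiset.replicate n a).filter p = if p a then Multiset.replicate n a else 0 := by
  split_ifs with h
  · exact Multiset.filter_eq_self.2 fun b hb => (Multiset.eq_of_mem_replicate hb) ▸ h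
  · exact Multiset.filter_eq_nil.2 fun b hb => (Multiset.eq_of_mem_replicate hb) ▸ h

lemma aux_bind_filter {α β : Type*} (s : Multiset α) (f : α → Multiset β) (p : α → Prop)
    [DecidablePred p] : (s.filter p).bind f = s.bind fun a => if p a then f a else 0 := by
  induction s using Multiset.induction with
  | empty => simp
  | cons a s ih =>
    rw [Multiset.filter_cons, Multiset.cons_bind, Multiset.add_bind, ← ih]
    split_ifs with h <;> simp

lemma aux_mEps_eq_sum (w : V → V → ℝ) (ε : ℝ) :
    mEps w ε = ∑ d ∈ (weightVals w).filter (fun m => ε < m), deathMult w d := by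
  rw [mEps, finiteDeaths, aux_filter_bind, Finset.sum_filter, Finset.sum_eq_multiset_sum,
    Multiset.card_bind]
  congr 1
  apply Multiset.map_congr rfl
  intro d _
  simp only [Function.comp_apply, aux_filter_replicate]
  split_ifs with h <;> simp

-- decomposition of finiteDeaths

lemma aux_finiteDeaths_split (w : V → V → ℝ) (ε : ℝ) :
    finiteDeaths w =
      (((weightVals w).filter (fun m => m ≤ ε)).val.bind
        fun d => Multiset.replicate (deathMult w d) d) +
      (finiteDeaths w).filter (fun d => ε < d) := by
  conv_lhs => rw [← Multiset.filter_add_not (fun d => d ≤ ε) (finiteDeaths w)]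
  congr 1
  · rw [finiteDeaths, aux_filter_bind, Finset.filter_val, aux_bind_filter]
    apply Multiset.bind_congr
    intro d _
    rw [aux_filter_replicate]
  · exact Multiset.filter_congr fun d _ => not_le

/-- The number of connected components of the Rips 1-skeleton at
scale `ε` satisfies `c(ε) = m(ε) + 1`, and consequently
`W_p(D₀(G), D₀(G_ε)) ≤ (c(ε) - 1)^{1/p} (1 - ε)`. -/
theorem compCount_eq_mEps_add_one_and_bound
    {N : ℕ} (hN : 0 < N) (w : Fin N → Fin N → ℝ)
    (hw0 : ∀ i j, 0 ≤ w i j) (hw1 : ∀ i j, w i j ≤ 1)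
    (hsymm : ∀ i j, w i j = w j i)
    (ε : ℝ) (hε0 : 0 ≤ ε) (hε1 : ε ≤ 1) (p : ℝ) (hp : 1 ≤ p) :
    compCount w ε = mEps w ε + 1 ∧
    diagramDist p (D0 w) (D0 (thresh w ε)) ≤
      ((compCount w ε : ℝ) - 1) ^ (1 / p) * (1 - ε) := by
  haveI : Nonempty (Fin N) := Fin.pos_iff_nonempty.1 hN
  have hppos : (0:ℝ) < p := lt_of_lt_of_le zero_lt_one hp
  have hp0 : p ≠ 0 := ne_of_gt hppos
  set w' := thresh w ε with hw'
  have hwv1 : ∀ m ∈ weightVals w, m ≤ (1:ℝ) := by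
    intro m hm
    obtain ⟨⟨i, j⟩, -, rfl⟩ := Finset.mem_image.1 hm
    exact max_le (hw1 i j) (hw1 j i)
  have hpart1 : compCount w ε = mEps w ε + 1 := by
    rw [aux_compCount_eq_sum w hwv1 ε, aux_mEps_eq_sum]
  refine ⟨hpart1, ?_⟩
  -- threshold weight characterization
  have hmw' : ∀ i j, max (w' i j) (w' j i) =
      if max (w i j) (w j i) ≤ ε then max (w i j) (w j i) else 1 := by
    intro i j
    have h1 : w j i = w i j := (hsymm i j).symm
    simp only [hw', thresh, h1, max_self]
  -- scale comparison below ε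
  have hvrlow : ∀ α : ℝ, α ≤ ε → vrGraph w' α = vrGraph w α := by
    intro α hα
    ext i j
    refine and_congr_right fun _ => ?_
    rw [hmw' i j]
    by_cases h : max (w i j) (w j i) ≤ ε
    · rw [if_pos h]
    · rw [if_neg h]
      push_neg at h
      have hm1 : max (w i j) (w j i) ≤ 1 := max_le (hw1 _ _) (hw1 _ _)
      constructor
      · intro h1α; linarith
      · intro hmα; linarith
  have hcclow : ∀ α : ℝ, α ≤ ε → compCount w' α = compCount w α := by
    intro α hα
    unfold compCount
    rw [hvrlow α hα]
  have hcleftlow : ∀ d : ℝ, d ≤ ε → compCountLeft w' d = compCountLeft w d := by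
    intro d hd
    unfold compCountLeft
    congr 1
    apply Set.image_congr
    intro α hα
    exact hcclow α (le_of_lt (lt_of_lt_of_le hα hd))
  have hdmlow : ∀ d : ℝ, d ≤ ε → deathMult w' d = deathMult w d := by
    intro d hd
    rw [deathMult, deathMult, hcleftlow d hd, hcclow d hd]
  -- the small weight values agree
  have hWFlow : (weightVals w').filter (fun m => m ≤ ε)
      = (weightVals w).filter (fun m => m ≤ ε) := by
    ext d
    simp only [Finset.mem_filter]
    constructor
    · rintro ⟨hd, hdε⟩
      obtain ⟨⟨i, j⟩, -, heq⟩ := Finset.mem_image.1 hd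
      rw [hmw' i j] at heq
      by_cases h : max (w i j) (w j i) ≤ ε
      · rw [if_pos h] at heq
        exact ⟨heq ▸ aux_mem_weightVals w i j, hdε⟩
      · rw [if_neg h] at heq
        push_neg at h
        have hm1 : max (w i j) (w j i) ≤ 1 := max_le (hw1 _ _) (hw1 _ _)
        exfalso
        rw [← heq] at hdε
        linarith
    · rintro ⟨hd, hdε⟩
      obtain ⟨⟨i, j⟩, -, heq⟩ := Finset.mem_image.1 hd
      refine ⟨?_, hdε⟩
      have hkey : max (w' i j) (w' j i) = d := by
        rw [hmw' i j, if_pos (le_of_eq_of_le heq hdε)]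
        exact heq
      exact hkey ▸ aux_mem_weightVals w' i j
  -- decomposition of both diagrams
  set B := (finiteDeaths w).filter (fun d => ε < d) with hBdef
  set A := ((weightVals w).filter (fun m => m ≤ ε)).val.bind
      (fun d => Multiset.replicate (deathMult w d) d) with hAdef
  have hA : finiteDeaths w = A + B := aux_finiteDeaths_split w ε
  have hB' : finiteDeaths w' = A + Multiset.replicate (mEps w ε) 1 := by
    unfold finiteDeaths
    have hsplit : (weightVals w').val
        = ((weightVals w').filter (fun m => m ≤ ε)).val
          + ((weightVals w').filter (fun m => ¬ m ≤ ε)).val := by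
      rw [Finset.filter_val, Finset.filter_val, Multiset.filter_add_not]
    rw [hsplit, Multiset.add_bind]
    congr 1
    · rw [hWFlow, hAdef]
      apply Multiset.bind_congr
      intro d hd
      have hdε : d ≤ ε := (Finset.mem_filter.1 (Finset.mem_def.2 hd)).2
      rw [hdmlow d hdε]
    · by_cases hex : ∃ q : Fin N × Fin N, ε < max (w q.1 q.2) (w q.2 q.1)
      · obtain ⟨⟨i, j⟩, hij⟩ := hex
        have hmw1 : max (w i j) (w j i) ≤ 1 := max_le (hw1 _ _) (hw1 _ _)
        have hε1' : ε < 1 := lt_of_lt_of_le hij hmw1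
        have h1mem : (1:ℝ) ∈ weightVals w' := by
          have hkey : max (w' i j) (w' j i) = 1 := by
            rw [hmw' i j, if_neg (not_le.2 hij)]
          exact hkey ▸ aux_mem_weightVals w' i j
        have hTsingle : (weightVals w').filter (fun m => ¬ m ≤ ε) = {1} := by
          ext d
          simp only [Finset.mem_filter, Finset.mem_singleton]
          constructor
          · rintro ⟨hd, hdε⟩
            obtain ⟨⟨k, l⟩, -, heq⟩ := Finset.mem_image.1 hd
            rw [hmw' k l] at heq
            by_cases h : max (w k l) (w l k) ≤ ε
            · rw [if_pos h] at heq
              exact absurd (heq ▸ h) hdε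
            · rw [if_neg h] at heq
              exact heq.symm
          · rintro rfl
            exact ⟨h1mem, not_le.2 hε1'⟩
        rw [hTsingle, Finset.singleton_val, Multiset.singleton_bind]
        congr 1
        have hcc1 : compCount w' 1 = 1 := by
          apply aux_compCount_eq_one w'
          intro k l
          rw [hmw' k l]
          split_ifs with h
          · exact max_le (hw1 _ _) (hw1 _ _)
          · exact le_refl 1
        have hcl1 : compCountLeft w' 1 = compCount w' ε := by
          apply aux_compCountLeft_eq w' hε1'
          intro m hm hm1
          obtain ⟨⟨k, l⟩, -, heq⟩ := Finset.mem_image.1 hm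
          rw [hmw' k l] at heq
          by_cases h : max (w k l) (w l k) ≤ ε
          · rw [if_pos h] at heq
            exact heq ▸ h
          · rw [if_neg h] at heq
            exfalso
            rw [← heq] at hm1
            exact lt_irrefl 1 hm1
        rw [deathMult, hcl1, hcc1, hcclow ε le_rfl, hpart1]
        omega
      · push_neg at hex
        have hTempty : (weightVals w').filter (fun m => ¬ m ≤ ε) = ∅ := by
          ext d
          simp only [Finset.mem_filter, Finset.notMem_empty, iff_false, not_and, not_not]
          intro hd
          obtain ⟨⟨k, l⟩, -, heq⟩ := Finset.mem_image.1 hd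
          rw [hmw' k l, if_pos (hex (k, l))] at heq
          exact heq ▸ hex (k, l)
        have hmEps0 : mEps w ε = 0 := by
          rw [mEps, Multiset.card_eq_zero]
          apply Multiset.filter_eq_nil.2
          intro d hd
          obtain ⟨d0, hd0, hmem⟩ := Multiset.mem_bind.1 hd
          obtain ⟨⟨k, l⟩, -, heq⟩ := Finset.mem_image.1 (Finset.mem_def.2 hd0)
          rw [Multiset.eq_of_mem_replicate hmem, ← heq]
          exact not_lt.2 (hex (k, l))
        rw [hTempty, hmEps0]
        simp
  -- the matching
  set M := A.map (fun d => (((0:ℝ), d), ((0:ℝ), d)))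
      + B.map (fun d => (((0:ℝ), d), ((0:ℝ), (1:ℝ)))) with hM
  have hmatch : IsMatching (D0 w) (D0 w') M := by
    refine ⟨0, 0, by simp, by simp, ?_, ?_⟩
    · rw [add_zero, D0, hA, hM]
      simp [Multiset.map_add, Multiset.map_map, Function.comp]
    · rw [add_zero, D0, hB', hM]
      simp only [Multiset.map_add, Multiset.map_map, Function.comp, Multiset.map_replicate]
      congr 1
      rw [Multiset.map_const']
      rfl
  -- elements of B
  have hd1 : ∀ d ∈ B, ε < d ∧ d ≤ 1 := by
    intro d hd
    rw [hBdef] at hd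
    have h1 := Multiset.mem_filter.1 hd
    refine ⟨h1.2, ?_⟩
    have h2 : d ∈ finiteDeaths w := h1.1
    unfold finiteDeaths at h2
    obtain ⟨d0, hd0, hmem⟩ := Multiset.mem_bind.1 h2
    rw [Multiset.eq_of_mem_replicate hmem]
    exact hwv1 d0 (Finset.mem_def.2 hd0)
  -- the cost of the matching
  have hcost : matchCost p M = (B.map fun d => |d - 1| ^ p).sum := by
    have e1 : ((A.map (fun d => (((0:ℝ), d), ((0:ℝ), d)))).map
        (fun q : (ℝ × ℝ) × (ℝ × ℝ) => |q.1.1 - q.2.1| ^ p + |q.1.2 - q.2.2| ^ p)).sum = 0 := by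
      apply Multiset.sum_eq_zero
      intro x hx
      obtain ⟨y, hy, rfl⟩ := Multiset.mem_map.1 hx
      obtain ⟨d, -, rfl⟩ := Multiset.mem_map.1 hy
      simp [Real.zero_rpow hp0]
    have e2 : ((B.map (fun d => (((0:ℝ), d), ((0:ℝ), (1:ℝ))))).map
        (fun q : (ℝ × ℝ) × (ℝ × ℝ) => |q.1.1 - q.2.1| ^ p + |q.1.2 - q.2.2| ^ p)).sum
        = (B.map fun d => |d - 1| ^ p).sum := by
      rw [Multiset.map_map]
      apply congrArg
      apply Multiset.map_congr rfl
      intro d _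
      simp [Real.zero_rpow hp0]
    rw [matchCost, hM, Multiset.map_add, Multiset.sum_add, e1, e2, zero_add]
  -- bounding the cost
  have h1ε : (0:ℝ) ≤ 1 - ε := by linarith
  have hcardB : Multiset.card B = mEps w ε := rfl
  have hcostle : matchCost p M ≤ (mEps w ε : ℝ) * (1 - ε) ^ p := by
    rw [hcost]
    calc (B.map fun d => |d - 1| ^ p).sum
        ≤ (B.map fun _ => (1 - ε) ^ p).sum := by
          apply Multiset.sum_map_le_sum_map
          intro d hd
          obtain ⟨hd1', hd2'⟩ := hd1 d hd
          apply Real.rpow_le_rpow (abs_nonneg _) ?_ (le_of_lt hppos)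
          rw [abs_of_nonpos (by linarith)]
          linarith
      _ = (mEps w ε : ℝ) * (1 - ε) ^ p := by
          rw [Multiset.map_const', Multiset.sum_replicate, hcardB, nsmul_eq_mul]
  have hcost0 : 0 ≤ matchCost p M := by
    apply Multiset.sum_nonneg
    intro x hx
    obtain ⟨q, -, rfl⟩ := Multiset.mem_map.1 hx
    exact add_nonneg (Real.rpow_nonneg (abs_nonneg _) _) (Real.rpow_nonneg (abs_nonneg _) _)
  -- conclude via the infimum
  have hdle : diagramDist p (D0 w) (D0 w') ≤ matchCost p M ^ (1 / p) := by
    apply csInf_le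
    · refine ⟨0, ?_⟩
      rintro c ⟨M', hM', rfl⟩
      apply Real.rpow_nonneg
      apply Multiset.sum_nonneg
      intro x hx
      obtain ⟨q, -, rfl⟩ := Multiset.mem_map.1 hx
      exact add_nonneg (Real.rpow_nonneg (abs_nonneg _) _) (Real.rpow_nonneg (abs_nonneg _) _)
    · exact ⟨M, hmatch, rfl⟩
  have hrw : ((mEps w ε : ℝ) * (1 - ε) ^ p) ^ (1 / p)
      = ((compCount w ε : ℝ) - 1) ^ (1 / p) * (1 - ε) := by
    rw [Real.mul_rpow (Nat.cast_nonneg _) (Real.rpow_nonneg h1ε _), ← Real.rpow_mul h1ε,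
      mul_one_div_cancel hp0, Real.rpow_one]
    congr 2
    rw [hpart1]
    push_cast
    ring
  calc diagramDist p (D0 w) (D0 w') ≤ matchCost p M ^ (1 / p) := hdle
    _ ≤ ((mEps w ε : ℝ) * (1 - ε) ^ p) ^ (1 / p) :=
        Real.rpow_le_rpow hcost0 hcostle (by positivity)
    _ = ((compCount w ε : ℝ) - 1) ^ (1 / p) * (1 - ε) := hrw

end
end
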